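/- Let p, q ≥ 2 be integers, μ ∈ ℂ ∖ {0}, and u₀, v₀ ∈ ℂ ∖ {0} with p·|u₀|^{p−1} = 1, q·|v₀|^{q−1} = 1, and Θ₂ = Θ₄ + κπ for some integer κ; assume cos Θ₂ ≠ 0 and k₁ ≠ 0, and set R̂ = R − tan(Θ₂)·Q. Let A = R̂_{r₁r₁}(x₀)/k₁², B = R̂_{r₁θ₁}(x₀)/k₁, C = R̂_{θ₁θ₁}(x₀), D = R̂_{r₂r₂}(x₀), E = R̂_{r₂θ₂}(x₀), F = R̂_{θ₂θ₂}(x₀), and let H be the 3×3 matrix [[k₂²A − 2k₂B + C, k₃(k₂A − B), k₄(k₂A − B)], [k₃(k₂A − B), k₃²A + D, k₃k₄A + E], [k₄(k₂A − B), k₃k₄A + E, k₄²A + F]]. Then det H = −(1/(k₁² cos Θ₂))·4(p−1)(q−1)|μ|²·φ, where φ = (−1)^κ (p−1)|v₀| sin Θ₃ + (q−1)|μ||u₀| sin Θ₁. -/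

import Mathlib

open Real

private lemma hd_sin_lin (k α x : ℝ) :
    HasDerivAt (fun θ : ℝ => Real.sin (k * θ + α)) (Real.cos (k * x + α) * k) x := by
  have h := (Real.hasDerivAt_sin (k * x + α)).comp x
    (((hasDerivAt_id x).const_mul k).add_const α)
  simpa [Function.comp_def] using h

private lemma hd_cos_lin (k α x : ℝ) :
    HasDerivAt (fun θ : ℝ => Real.cos (k * θ + α)) (-Real.sin (k * x + α) * k) x := by
  have h := (Real.hasDerivAt_cos (k * x + α)).comp x
    (((hasDerivAt_id x).const_mul k).add_const α)
  simpa [Function.comp_def] using h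

private lemma hd_sin_neg (α x : ℝ) :
    HasDerivAt (fun θ : ℝ => Real.sin (-θ + α)) (-Real.cos (-x + α)) x := by
  have h := (Real.hasDerivAt_sin (-x + α)).comp x ((hasDerivAt_id x).neg.add_const α)
  simpa [Function.comp_def] using h

private lemma hd_cos_neg (α x : ℝ) :
    HasDerivAt (fun θ : ℝ => Real.cos (-θ + α)) (Real.sin (-x + α)) x := by
  have h := (Real.hasDerivAt_cos (-x + α)).comp x ((hasDerivAt_id x).neg.add_const α)
  simpa [Function.comp_def] using h

private lemma hd_sin_mul (k x : ℝ) :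
    HasDerivAt (fun θ : ℝ => Real.sin (k * θ)) (Real.cos (k * x) * k) x := by
  have h := (Real.hasDerivAt_sin (k * x)).comp x ((hasDerivAt_id x).const_mul k)
  simpa [Function.comp_def] using h

private lemma hd_cos_mul (k x : ℝ) :
    HasDerivAt (fun θ : ℝ => Real.cos (k * θ)) (-Real.sin (k * x) * k) x := by
  have h := (Real.hasDerivAt_cos (k * x)).comp x ((hasDerivAt_id x).const_mul k)
  simpa [Function.comp_def] using h

private lemma hd_sin_negid (x : ℝ) :
    HasDerivAt (fun θ : ℝ => Real.sin (-θ)) (-Real.cos (-x)) x := by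
  have h := (Real.hasDerivAt_sin (-x)).comp x (hasDerivAt_id x).neg
  simp only [Function.comp_def, id_eq] at h
  have e : -Real.cos (-x) = Real.cos (-x) * -1 := by ring
  rw [e]; exact h

private lemma hd_cos_negid (x : ℝ) :
    HasDerivAt (fun θ : ℝ => Real.cos (-θ)) (Real.sin (-x)) x := by
  have h := (Real.hasDerivAt_cos (-x)).comp x (hasDerivAt_id x).neg
  simp only [Function.comp_def, id_eq] at h
  have e : Real.sin (-x) = -Real.sin (-x) * -1 := by ring
  rw [e]; exact h

private lemma hd_poly (c₁ c₂ c₃ : ℝ) (n : ℕ) (x : ℝ) :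
    HasDerivAt (fun r : ℝ => c₁ * r ^ n + c₂ * r + c₃)
      (c₁ * (n * x ^ (n - 1)) + c₂) x := by
  have h := (((hasDerivAt_pow n x).const_mul c₁).add
    ((hasDerivAt_id x).const_mul c₂)).add_const c₃
  simpa using h

private lemma hd_trig (c₁ c₂ c₃ c₄ c₅ k α : ℝ) (x : ℝ) :
    HasDerivAt (fun θ : ℝ => c₁ * Real.sin (k * θ + α) + c₂ * Real.cos (k * θ + α)
        + c₃ * Real.sin (-θ + α) + c₄ * Real.cos (-θ + α) + c₅)
      (c₁ * (Real.cos (k * x + α) * k) + c₂ * (-Real.sin (k * x + α) * k)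
        + c₃ * (-Real.cos (-x + α)) + c₄ * Real.sin (-x + α)) x := by
  have h := (((((hd_sin_lin k α x).const_mul c₁).add ((hd_cos_lin k α x).const_mul c₂)).add
    ((hd_sin_neg α x).const_mul c₃)).add ((hd_cos_neg α x).const_mul c₄)).add_const c₅
  simpa using h

private lemma hd_trig0 (c₁ c₂ c₃ c₄ c₅ k : ℝ) (x : ℝ) :
    HasDerivAt (fun θ : ℝ => c₁ * Real.sin (k * θ) + c₂ * Real.cos (k * θ)
        + c₃ * Real.sin (-θ) + c₄ * Real.cos (-θ) + c₅)
      (c₁ * (Real.cos (k * x) * k) + c₂ * (-Real.sin (k * x) * k)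
        + c₃ * (-Real.cos (-x)) + c₄ * Real.sin (-x)) x := by
  have h := (((((hd_sin_mul k x).const_mul c₁).add ((hd_cos_mul k x).const_mul c₂)).add
    ((hd_sin_negid x).const_mul c₃)).add ((hd_cos_negid x).const_mul c₄)).add_const c₅
  simpa using h

private lemma pow_pred (x : ℝ) {n : ℕ} (h : 1 ≤ n) : x ^ (n - 1) * x = x ^ n := by
  rw [← pow_succ]
  congr 1
  omega

set_option maxHeartbeats 2000000 in
private lemma key_det (P Qr m s t c1 s1 c2 c3 s3 ε k1 k2 k3 k4 A B C D E F φ : ℝ)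
    (hs : s ≠ 0) (ht : t ≠ 0) (hc2 : c2 ≠ 0) (hk0 : k1 ≠ 0)
    (h1 : s1 ^ 2 + c1 ^ 2 = 1) (h3 : s3 ^ 2 + c3 ^ 2 = 1) (hε : ε * ε = 1)
    (hk1 : k1 = 2 * m * (c1 * c2)) (hk2 : k2 = -(2 * m * s * (s1 * c2)))
    (hk3 : k3 = 2 * ε * (c3 * c2)) (hk4 : k4 = -(2 * t * ε * (s3 * c2)))
    (hA : A * (k1 ^ 2 * (s * c2)) = m * (P - 1) * s1)
    (hB : B * (k1 * c2) = m * (P - 1) * c1)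
    (hC : C * c2 = -(m * s * ((P - 1) * s1)))
    (hD : D * (t * c2) = (Qr - 1) * (ε * s3))
    (hE : E * c2 = (Qr - 1) * (ε * c3))
    (hF : F * c2 = -(t * ((Qr - 1) * (ε * s3))))
    (hφ : φ = ε * (P - 1) * t * s3 + (Qr - 1) * m * s * s1) :
    Matrix.det
      !![k2 ^ 2 * A - 2 * k2 * B + C, k3 * (k2 * A - B), k4 * (k2 * A - B);
         k3 * (k2 * A - B), k3 ^ 2 * A + D, k3 * k4 * A + E;
         k4 * (k2 * A - B), k3 * k4 * A + E, k4 ^ 2 * A + F]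
      = -(1 / (k1 ^ 2 * c2)) * (4 * (P - 1) * (Qr - 1) * m ^ 2) * φ := by
  have hm : m ≠ 0 := by
    intro h
    exact hk0 (by rw [hk1, h]; ring)
  have hc1 : c1 ≠ 0 := by
    intro h
    exact hk0 (by rw [hk1, h]; ring)
  have hden1 : (4:ℝ) * m * s * c1 ^ 2 * c2 ^ 3 ≠ 0 := by
    apply mul_ne_zero (mul_ne_zero (mul_ne_zero (mul_ne_zero (by norm_num) hm) hs)
      (pow_ne_zero 2 hc1)) (pow_ne_zero 3 hc2)
  have hAv : A = (P - 1) * s1 / (4 * m * s * c1 ^ 2 * c2 ^ 3) := by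
    rw [eq_div_iff hden1]
    refine mul_left_cancel₀ hm ?_
    rw [hk1] at hA
    linear_combination hA
  have hBv : B = (P - 1) / (2 * c2 ^ 2) := by
    rw [eq_div_iff (by exact mul_ne_zero (by norm_num) (pow_ne_zero 2 hc2))]
    refine mul_left_cancel₀ (mul_ne_zero hm hc1) ?_
    rw [hk1] at hB
    linear_combination hB
  have hCv : C = -(m * s * ((P - 1) * s1)) / c2 := (eq_div_iff hc2).mpr hC
  have hDv : D = (Qr - 1) * (ε * s3) / (t * c2) := (eq_div_iff (mul_ne_zero ht hc2)).mpr hD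
  have hEv : E = (Qr - 1) * (ε * c3) / c2 := (eq_div_iff hc2).mpr hE
  have hFv : F = -(t * ((Qr - 1) * (ε * s3))) / c2 := (eq_div_iff hc2).mpr hF
  rw [Matrix.det_fin_three]
  simp only [Matrix.of_apply, Matrix.cons_val', Matrix.cons_val_zero, Matrix.cons_val_one, Matrix.cons_val_two, Matrix.empty_val', Matrix.cons_val_fin_one, Matrix.head_cons, Matrix.tail_cons, Matrix.head_fin_const]
  rw [hAv, hBv, hCv, hDv, hEv, hFv, hk2, hk3, hk4, hk1, hφ]
  field_simp
  rw [show c1 ^ 4 = (1 - s1 ^ 2) ^ 2 by rw [show c1 ^ 4 = (c1 ^ 2) ^ 2 by ring]; rw [show c1 ^ 2 = 1 - s1 ^ 2 by linear_combination h1],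
    show c1 ^ 2 = 1 - s1 ^ 2 by linear_combination h1, show c3 ^ 2 = 1 - s3 ^ 2 by linear_combination h3]
  rcases mul_self_eq_one_iff.mp hε with h | h <;> subst h <;> ring

set_option maxHeartbeats 1000000 in
/-- Proposition 3.9: the determinant of the Hessian `H` at a singular
point with `k₁ ≠ 0` is `-(4(p-1)(q-1)|μ|²/(k₁² cos Θ₂)) φ`, where
`φ = (-1)^κ (p-1)|v₀| sin Θ₃ + (q-1)|μ||u₀| sin Θ₁`. -/
theorem hessian_determinant_at_singular_point
    (p q : ℕ) (hp : 2 ≤ p) (hq : 2 ≤ q) (μ : ℂ) (hμ : μ ≠ 0)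
    (u₀ v₀ : ℂ) (hu₀ : u₀ ≠ 0) (hv₀ : v₀ ≠ 0)
    (hu : (p : ℝ) * ‖u₀‖ ^ (p - 1) = 1)
    (hv : (q : ℝ) * ‖v₀‖ ^ (q - 1) = 1)
    (Q R Rhat : ℝ → ℝ → ℝ → ℝ → ℝ)
    (hQ : ∀ r₁ θ₁ r₂ θ₂, Q r₁ θ₁ r₂ θ₂ =
      ‖μ‖ * r₁ ^ p * Real.cos (p * θ₁ + Complex.arg μ)
        + ‖μ‖ * r₁ * Real.cos (-θ₁ + Complex.arg μ)
        + r₂ ^ q * Real.cos (q * θ₂) + r₂ * Real.cos (-θ₂))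
    (hR : ∀ r₁ θ₁ r₂ θ₂, R r₁ θ₁ r₂ θ₂ =
      ‖μ‖ * r₁ ^ p * Real.sin (p * θ₁ + Complex.arg μ)
        + ‖μ‖ * r₁ * Real.sin (-θ₁ + Complex.arg μ)
        + r₂ ^ q * Real.sin (q * θ₂) + r₂ * Real.sin (-θ₂))
    (Θ₁ Θ₂ Θ₃ Θ₄ : ℝ)
    (hΘ₁ : Θ₁ = ((p : ℝ) + 1) / 2 * Complex.arg u₀)
    (hΘ₂ : Θ₂ = ((p : ℝ) - 1) / 2 * Complex.arg u₀ + Complex.arg μ)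
    (hΘ₃ : Θ₃ = ((q : ℝ) + 1) / 2 * Complex.arg v₀)
    (hΘ₄ : Θ₄ = ((q : ℝ) - 1) / 2 * Complex.arg v₀)
    (κ : ℤ) (hκ : Θ₂ = Θ₄ + κ * Real.pi)
    (hcos : Real.cos Θ₂ ≠ 0)
    (hRhat : ∀ r₁ θ₁ r₂ θ₂, Rhat r₁ θ₁ r₂ θ₂ =
      R r₁ θ₁ r₂ θ₂ - Real.tan Θ₂ * Q r₁ θ₁ r₂ θ₂)
    (k₁ k₂ k₃ k₄ : ℝ)
    (hk₁ : k₁ = deriv (fun r₁ => Q r₁ (Complex.arg u₀) (‖v₀‖) (Complex.arg v₀))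
      (‖u₀‖))
    (hk₂ : k₂ = deriv (fun θ₁ => Q (‖u₀‖) θ₁ (‖v₀‖) (Complex.arg v₀))
      (Complex.arg u₀))
    (hk₃ : k₃ = deriv (fun r₂ => Q (‖u₀‖) (Complex.arg u₀) r₂ (Complex.arg v₀))
      (‖v₀‖))
    (hk₄ : k₄ = deriv (fun θ₂ => Q (‖u₀‖) (Complex.arg u₀) (‖v₀‖) θ₂)
      (Complex.arg v₀))
    (hk₁0 : k₁ ≠ 0)
    (A B C D E F : ℝ)
    (hA : A = deriv (deriv (fun r₁ =>
        Rhat r₁ (Complex.arg u₀) (‖v₀‖) (Complex.arg v₀))) (‖u₀‖) / k₁ ^ 2)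
    (hB : B = deriv (fun θ₁ =>
        deriv (fun r₁ => Rhat r₁ θ₁ (‖v₀‖) (Complex.arg v₀)) (‖u₀‖))
        (Complex.arg u₀) / k₁)
    (hC : C = deriv (deriv (fun θ₁ =>
        Rhat (‖u₀‖) θ₁ (‖v₀‖) (Complex.arg v₀))) (Complex.arg u₀))
    (hD : D = deriv (deriv (fun r₂ =>
        Rhat (‖u₀‖) (Complex.arg u₀) r₂ (Complex.arg v₀))) (‖v₀‖))
    (hE : E = deriv (fun θ₂ =>
        deriv (fun r₂ => Rhat (‖u₀‖) (Complex.arg u₀) r₂ θ₂) (‖v₀‖))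
        (Complex.arg v₀))
    (hF : F = deriv (deriv (fun θ₂ =>
        Rhat (‖u₀‖) (Complex.arg u₀) (‖v₀‖) θ₂)) (Complex.arg v₀))
    (φ : ℝ)
    (hφ : φ = (-1 : ℝ) ^ κ * ((p : ℝ) - 1) * ‖v₀‖ * Real.sin Θ₃
      + ((q : ℝ) - 1) * ‖μ‖ * ‖u₀‖ * Real.sin Θ₁) :
    Matrix.det
      !![k₂ ^ 2 * A - 2 * k₂ * B + C, k₃ * (k₂ * A - B), k₄ * (k₂ * A - B);
         k₃ * (k₂ * A - B), k₃ ^ 2 * A + D, k₃ * k₄ * A + E;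
         k₄ * (k₂ * A - B), k₃ * k₄ * A + E, k₄ ^ 2 * A + F]
      = -(1 / (k₁ ^ 2 * Real.cos Θ₂)) * (4 * ((p : ℝ) - 1) * ((q : ℝ) - 1)
          * ‖μ‖ ^ 2) * φ := by
  set m := ‖μ‖ with hm_def
  set s := ‖u₀‖ with hs_def
  set a := Complex.arg u₀ with ha_def
  set t := ‖v₀‖ with ht_def
  set b := Complex.arg v₀ with hb_def
  set αm := Complex.arg μ with hαm_def
  set tn := Real.tan Θ₂ with htn_def
  have hm0 : m ≠ 0 := by rw [hm_def]; exact norm_ne_zero_iff.mpr hμ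
  have hs0 : s ≠ 0 := by rw [hs_def]; exact norm_ne_zero_iff.mpr hu₀
  have ht0 : t ≠ 0 := by rw [ht_def]; exact norm_ne_zero_iff.mpr hv₀
  have haS : (p : ℝ) * a + αm = Θ₁ + Θ₂ := by rw [hΘ₁, hΘ₂]; ring
  have haDl : -a + αm = Θ₂ - Θ₁ := by rw [hΘ₁, hΘ₂]; ring
  have hbS : (q : ℝ) * b = Θ₃ + Θ₄ := by rw [hΘ₃, hΘ₄]; ring
  have hbDl : -b = Θ₄ - Θ₃ := by rw [hΘ₃, hΘ₄]; ring
  have hT : tn * Real.cos Θ₂ = Real.sin Θ₂ := by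
    rw [htn_def, Real.tan_eq_sin_div_cos, div_mul_cancel₀ _ hcos]
  have hc24 : Real.cos Θ₂ = (-1 : ℝ) ^ κ * Real.cos Θ₄ := by
    rw [hκ]; exact Real.cos_add_int_mul_pi Θ₄ κ
  have hs24 : Real.sin Θ₂ = (-1 : ℝ) ^ κ * Real.sin Θ₄ := by
    rw [hκ]; exact Real.sin_add_int_mul_pi Θ₄ κ
  have hεε : ((-1 : ℝ) ^ κ) * ((-1 : ℝ) ^ κ) = 1 := by
    rw [← mul_zpow]; norm_num
  have py1 := Real.sin_sq_add_cos_sq Θ₁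
  have py2 := Real.sin_sq_add_cos_sq Θ₂
  have py3 := Real.sin_sq_add_cos_sq Θ₃
  have py4 := Real.sin_sq_add_cos_sq Θ₄
  have h1p : 1 ≤ p := by omega
  have h1p' : 1 ≤ p - 1 := by omega
  have h1q : 1 ≤ q := by omega
  have h1q' : 1 ≤ q - 1 := by omega
  have hsp1 : s ^ (p - 1) * s = s ^ p := pow_pred s h1p
  have hsp2 : s ^ (p - 1 - 1) * s = s ^ (p - 1) := pow_pred s h1p'
  have htp1 : t ^ (q - 1) * t = t ^ q := pow_pred t h1q
  have htp2 : t ^ (q - 1 - 1) * t = t ^ (q - 1) := pow_pred t h1q'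
  have hpc : ((p - 1 : ℕ) : ℝ) = (p : ℝ) - 1 := by rw [Nat.cast_sub h1p, Nat.cast_one]
  have hqc : ((q - 1 : ℕ) : ℝ) = (q : ℝ) - 1 := by rw [Nat.cast_sub h1q, Nat.cast_one]
  -- k₁
  have eQ1 : (fun r₁ => Q r₁ a t b) = fun r₁ : ℝ =>
      (m * Real.cos ((p : ℝ) * a + αm)) * r₁ ^ p + (m * Real.cos (-a + αm)) * r₁
        + (t ^ q * Real.cos ((q : ℝ) * b) + t * Real.cos (-b)) := by
    funext r; rw [hQ]; ring
  have hk1v : k₁ = (m * Real.cos ((p : ℝ) * a + αm)) * ((p : ℝ) * s ^ (p - 1))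
      + (m * Real.cos (-a + αm)) := by
    rw [hk₁, eQ1]; exact (hd_poly _ _ _ p s).deriv
  have hk1c : k₁ = 2 * m * (Real.cos Θ₁ * Real.cos Θ₂) := by
    rw [hk1v, haS, haDl, Real.cos_add, Real.cos_sub]
    linear_combination (m * (Real.cos Θ₁ * Real.cos Θ₂ - Real.sin Θ₁ * Real.sin Θ₂)) * hu
  -- k₂
  have eQ2 : (fun θ₁ => Q s θ₁ t b) = fun θ : ℝ =>
      0 * Real.sin ((p : ℝ) * θ + αm) + (m * s ^ p) * Real.cos ((p : ℝ) * θ + αm)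
        + 0 * Real.sin (-θ + αm) + (m * s) * Real.cos (-θ + αm)
        + (t ^ q * Real.cos ((q : ℝ) * b) + t * Real.cos (-b)) := by
    funext θ; rw [hQ]; ring
  have hk2v : k₂ = 0 * (Real.cos ((p : ℝ) * a + αm) * (p : ℝ))
      + (m * s ^ p) * (-Real.sin ((p : ℝ) * a + αm) * (p : ℝ))
      + 0 * (-Real.cos (-a + αm)) + (m * s) * Real.sin (-a + αm) := by
    rw [hk₂, eQ2]; exact (hd_trig _ _ _ _ _ _ _ a).deriv
  have hk2c : k₂ = -(2 * m * s * (Real.sin Θ₁ * Real.cos Θ₂)) := by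
    rw [hk2v, haS, haDl, Real.sin_add, Real.sin_sub]
    linear_combination
      (m * (p : ℝ) * (Real.sin Θ₁ * Real.cos Θ₂ + Real.cos Θ₁ * Real.sin Θ₂)) * hsp1
      + (-(m * s * (Real.sin Θ₁ * Real.cos Θ₂ + Real.cos Θ₁ * Real.sin Θ₂))) * hu
  -- k₃
  have eQ3 : (fun r₂ => Q s a r₂ b) = fun r : ℝ =>
      (Real.cos ((q : ℝ) * b)) * r ^ q + (Real.cos (-b)) * r
        + (m * s ^ p * Real.cos ((p : ℝ) * a + αm) + m * s * Real.cos (-a + αm)) := by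
    funext r; rw [hQ]; ring
  have hk3v : k₃ = (Real.cos ((q : ℝ) * b)) * ((q : ℝ) * t ^ (q - 1)) + (Real.cos (-b)) := by
    rw [hk₃, eQ3]; exact (hd_poly _ _ _ q t).deriv
  have hk3c : k₃ = 2 * ((-1 : ℝ) ^ κ) * (Real.cos Θ₃ * Real.cos Θ₂) := by
    rw [hk3v, hbS, hbDl, Real.cos_add, Real.cos_sub]
    linear_combination (Real.cos Θ₃ * Real.cos Θ₄ - Real.sin Θ₃ * Real.sin Θ₄) * hv
      + (-(2 * ((-1 : ℝ) ^ κ) * Real.cos Θ₃)) * hc24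
      + (-(2 * (Real.cos Θ₃ * Real.cos Θ₄))) * hεε
  -- k₄
  have eQ4 : (fun θ₂ => Q s a t θ₂) = fun θ : ℝ =>
      0 * Real.sin ((q : ℝ) * θ) + (t ^ q) * Real.cos ((q : ℝ) * θ)
        + 0 * Real.sin (-θ) + t * Real.cos (-θ)
        + (m * s ^ p * Real.cos ((p : ℝ) * a + αm) + m * s * Real.cos (-a + αm)) := by
    funext θ; rw [hQ]; ring
  have hk4v : k₄ = 0 * (Real.cos ((q : ℝ) * b) * (q : ℝ))
      + (t ^ q) * (-Real.sin ((q : ℝ) * b) * (q : ℝ))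
      + 0 * (-Real.cos (-b)) + t * Real.sin (-b) := by
    rw [hk₄, eQ4]; exact (hd_trig0 _ _ _ _ _ _ b).deriv
  have hk4c : k₄ = -(2 * t * ((-1 : ℝ) ^ κ) * (Real.sin Θ₃ * Real.cos Θ₂)) := by
    rw [hk4v, hbS, hbDl, Real.sin_add, Real.sin_sub]
    linear_combination
      ((q : ℝ) * (Real.sin Θ₃ * Real.cos Θ₄ + Real.cos Θ₃ * Real.sin Θ₄)) * htp1
      + (-(t * (Real.sin Θ₃ * Real.cos Θ₄ + Real.cos Θ₃ * Real.sin Θ₄))) * hv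
      + (2 * t * ((-1 : ℝ) ^ κ) * Real.sin Θ₃) * hc24
      + (2 * t * (Real.sin Θ₃ * Real.cos Θ₄)) * hεε
  -- A (second r₁-derivative of Rhat)
  have eR1 : ∀ θ : ℝ, (fun r₁ => Rhat r₁ θ t b) = fun r : ℝ =>
      (m * (Real.sin ((p : ℝ) * θ + αm) - tn * Real.cos ((p : ℝ) * θ + αm))) * r ^ p
        + (m * (Real.sin (-θ + αm) - tn * Real.cos (-θ + αm))) * r
        + (t ^ q * Real.sin ((q : ℝ) * b) + t * Real.sin (-b)
            - tn * (t ^ q * Real.cos ((q : ℝ) * b)) - tn * (t * Real.cos (-b))) := by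
    intro θ; funext r; rw [hRhat, hR, hQ]; ring
  have hdA1 : deriv (fun r₁ => Rhat r₁ a t b) = fun x : ℝ =>
      (m * (Real.sin ((p : ℝ) * a + αm) - tn * Real.cos ((p : ℝ) * a + αm)))
          * ((p : ℝ) * x ^ (p - 1))
        + (m * (Real.sin (-a + αm) - tn * Real.cos (-a + αm))) := by
    funext x; rw [eR1 a]; exact (hd_poly _ _ _ p x).deriv
  have eA2 : (fun x : ℝ =>
      (m * (Real.sin ((p : ℝ) * a + αm) - tn * Real.cos ((p : ℝ) * a + αm)))
          * ((p : ℝ) * x ^ (p - 1))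
        + (m * (Real.sin (-a + αm) - tn * Real.cos (-a + αm)))) = fun x : ℝ =>
      (m * (Real.sin ((p : ℝ) * a + αm) - tn * Real.cos ((p : ℝ) * a + αm)) * (p : ℝ))
          * x ^ (p - 1) + 0 * x
        + (m * (Real.sin (-a + αm) - tn * Real.cos (-a + αm))) := by
    funext x; ring
  have hNAv : deriv (deriv (fun r₁ => Rhat r₁ a t b)) s
      = (m * (Real.sin ((p : ℝ) * a + αm) - tn * Real.cos ((p : ℝ) * a + αm)) * (p : ℝ))
          * (((p - 1 : ℕ) : ℝ) * s ^ (p - 1 - 1)) + 0 := by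
    rw [hdA1, eA2]; exact (hd_poly _ _ _ (p - 1) s).deriv
  have hNAc : deriv (deriv (fun r₁ => Rhat r₁ a t b)) s * (s * Real.cos Θ₂)
      = m * ((p : ℝ) - 1) * Real.sin Θ₁ := by
    rw [hNAv, hpc, haS, Real.sin_add, Real.cos_add]
    linear_combination
      (m * (p : ℝ) * ((p : ℝ) - 1) * (Real.sin Θ₁ * Real.cos Θ₂ + Real.cos Θ₁ * Real.sin Θ₂
          - tn * (Real.cos Θ₁ * Real.cos Θ₂ - Real.sin Θ₁ * Real.sin Θ₂)) * Real.cos Θ₂) * hsp2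
      + (m * ((p : ℝ) - 1) * (Real.sin Θ₁ * Real.cos Θ₂ + Real.cos Θ₁ * Real.sin Θ₂
          - tn * (Real.cos Θ₁ * Real.cos Θ₂ - Real.sin Θ₁ * Real.sin Θ₂)) * Real.cos Θ₂) * hu
      + (-(m * ((p : ℝ) - 1) * (Real.cos Θ₁ * Real.cos Θ₂ - Real.sin Θ₁ * Real.sin Θ₂))) * hT
      + (m * ((p : ℝ) - 1) * Real.sin Θ₁) * py2
  -- B (mixed derivative)
  have hdB1 : (fun θ₁ => deriv (fun r₁ => Rhat r₁ θ₁ t b) s) = fun θ : ℝ =>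
      (m * (Real.sin ((p : ℝ) * θ + αm) - tn * Real.cos ((p : ℝ) * θ + αm)))
          * ((p : ℝ) * s ^ (p - 1))
        + (m * (Real.sin (-θ + αm) - tn * Real.cos (-θ + αm))) := by
    funext θ; rw [eR1 θ]; exact (hd_poly _ _ _ p s).deriv
  have eB2 : (fun θ : ℝ =>
      (m * (Real.sin ((p : ℝ) * θ + αm) - tn * Real.cos ((p : ℝ) * θ + αm)))
          * ((p : ℝ) * s ^ (p - 1))
        + (m * (Real.sin (-θ + αm) - tn * Real.cos (-θ + αm)))) = fun θ : ℝ =>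
      (m * ((p : ℝ) * s ^ (p - 1))) * Real.sin ((p : ℝ) * θ + αm)
        + (-(m * tn * ((p : ℝ) * s ^ (p - 1)))) * Real.cos ((p : ℝ) * θ + αm)
        + m * Real.sin (-θ + αm) + (-(m * tn)) * Real.cos (-θ + αm) + 0 := by
    funext θ; ring
  have hNBv : deriv (fun θ₁ => deriv (fun r₁ => Rhat r₁ θ₁ t b) s) a
      = (m * ((p : ℝ) * s ^ (p - 1))) * (Real.cos ((p : ℝ) * a + αm) * (p : ℝ))
        + (-(m * tn * ((p : ℝ) * s ^ (p - 1)))) * (-Real.sin ((p : ℝ) * a + αm) * (p : ℝ))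
        + m * (-Real.cos (-a + αm)) + (-(m * tn)) * Real.sin (-a + αm) := by
    rw [hdB1, eB2]; exact (hd_trig _ _ _ _ _ _ _ a).deriv
  have hNBc : deriv (fun θ₁ => deriv (fun r₁ => Rhat r₁ θ₁ t b) s) a * Real.cos Θ₂
      = m * ((p : ℝ) - 1) * Real.cos Θ₁ := by
    rw [hNBv, haS, haDl, Real.sin_add, Real.cos_add, Real.sin_sub, Real.cos_sub]
    linear_combination
      (m * (p : ℝ) * Real.cos Θ₂ * (Real.cos Θ₁ * Real.cos Θ₂ - Real.sin Θ₁ * Real.sin Θ₂)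
        + m * tn * (p : ℝ) * Real.cos Θ₂
          * (Real.sin Θ₁ * Real.cos Θ₂ + Real.cos Θ₁ * Real.sin Θ₂)) * hu
      + (m * (p : ℝ) * (Real.sin Θ₁ * Real.cos Θ₂ + Real.cos Θ₁ * Real.sin Θ₂)
          - m * (Real.sin Θ₂ * Real.cos Θ₁ - Real.cos Θ₂ * Real.sin Θ₁)) * hT
      + (m * (p : ℝ) * Real.cos Θ₁ - m * Real.cos Θ₁) * py2
  -- C (second θ₁-derivative)
  have eR2 : (fun θ₁ => Rhat s θ₁ t b) = fun θ : ℝ =>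
      (m * s ^ p) * Real.sin ((p : ℝ) * θ + αm)
        + (-(m * s ^ p * tn)) * Real.cos ((p : ℝ) * θ + αm)
        + (m * s) * Real.sin (-θ + αm) + (-(m * s * tn)) * Real.cos (-θ + αm)
        + (t ^ q * Real.sin ((q : ℝ) * b) + t * Real.sin (-b)
            - tn * (t ^ q * Real.cos ((q : ℝ) * b)) - tn * (t * Real.cos (-b))) := by
    funext θ; rw [hRhat, hR, hQ]; ring
  have hdC1 : deriv (fun θ₁ => Rhat s θ₁ t b) = fun x : ℝ =>
      (m * s ^ p) * (Real.cos ((p : ℝ) * x + αm) * (p : ℝ))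
        + (-(m * s ^ p * tn)) * (-Real.sin ((p : ℝ) * x + αm) * (p : ℝ))
        + (m * s) * (-Real.cos (-x + αm)) + (-(m * s * tn)) * Real.sin (-x + αm) := by
    funext x; rw [eR2]; exact (hd_trig _ _ _ _ _ _ _ x).deriv
  have eC2 : (fun x : ℝ =>
      (m * s ^ p) * (Real.cos ((p : ℝ) * x + αm) * (p : ℝ))
        + (-(m * s ^ p * tn)) * (-Real.sin ((p : ℝ) * x + αm) * (p : ℝ))
        + (m * s) * (-Real.cos (-x + αm)) + (-(m * s * tn)) * Real.sin (-x + αm)) = fun x : ℝ =>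
      (m * s ^ p * tn * (p : ℝ)) * Real.sin ((p : ℝ) * x + αm)
        + (m * s ^ p * (p : ℝ)) * Real.cos ((p : ℝ) * x + αm)
        + (-(m * s * tn)) * Real.sin (-x + αm) + (-(m * s)) * Real.cos (-x + αm) + 0 := by
    funext x; ring
  have hCv : deriv (deriv (fun θ₁ => Rhat s θ₁ t b)) a
      = (m * s ^ p * tn * (p : ℝ)) * (Real.cos ((p : ℝ) * a + αm) * (p : ℝ))
        + (m * s ^ p * (p : ℝ)) * (-Real.sin ((p : ℝ) * a + αm) * (p : ℝ))
        + (-(m * s * tn)) * (-Real.cos (-a + αm)) + (-(m * s)) * Real.sin (-a + αm) := by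
    rw [hdC1, eC2]; exact (hd_trig _ _ _ _ _ _ _ a).deriv
  have hCc : deriv (deriv (fun θ₁ => Rhat s θ₁ t b)) a * Real.cos Θ₂
      = -(m * s * (((p : ℝ) - 1) * Real.sin Θ₁)) := by
    rw [hCv, haS, haDl, Real.sin_add, Real.cos_add, Real.sin_sub, Real.cos_sub]
    linear_combination
      (-(m * (p : ℝ) ^ 2 * (tn * (Real.cos Θ₁ * Real.cos Θ₂ - Real.sin Θ₁ * Real.sin Θ₂)
          - (Real.sin Θ₁ * Real.cos Θ₂ + Real.cos Θ₁ * Real.sin Θ₂)) * Real.cos Θ₂)) * hsp1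
      + (m * s * (p : ℝ) * (tn * (Real.cos Θ₁ * Real.cos Θ₂ - Real.sin Θ₁ * Real.sin Θ₂)
          - (Real.sin Θ₁ * Real.cos Θ₂ + Real.cos Θ₁ * Real.sin Θ₂)) * Real.cos Θ₂) * hu
      + (m * s * (p : ℝ) * (Real.cos Θ₁ * Real.cos Θ₂ - Real.sin Θ₁ * Real.sin Θ₂)
          + m * s * (Real.cos Θ₂ * Real.cos Θ₁ + Real.sin Θ₂ * Real.sin Θ₁)) * hT
      + (-(m * s * (p : ℝ) * Real.sin Θ₁) + m * s * Real.sin Θ₁) * py2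
  -- D (second r₂-derivative)
  have eR3 : ∀ θ : ℝ, (fun r₂ => Rhat s a r₂ θ) = fun r : ℝ =>
      (Real.sin ((q : ℝ) * θ) - tn * Real.cos ((q : ℝ) * θ)) * r ^ q
        + (Real.sin (-θ) - tn * Real.cos (-θ)) * r
        + (m * s ^ p * Real.sin ((p : ℝ) * a + αm) + m * s * Real.sin (-a + αm)
            - tn * (m * s ^ p * Real.cos ((p : ℝ) * a + αm))
            - tn * (m * s * Real.cos (-a + αm))) := by
    intro θ; funext r; rw [hRhat, hR, hQ]; ring
  have hdD1 : deriv (fun r₂ => Rhat s a r₂ b) = fun x : ℝ =>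
      (Real.sin ((q : ℝ) * b) - tn * Real.cos ((q : ℝ) * b)) * ((q : ℝ) * x ^ (q - 1))
        + (Real.sin (-b) - tn * Real.cos (-b)) := by
    funext x; rw [eR3 b]; exact (hd_poly _ _ _ q x).deriv
  have eD2 : (fun x : ℝ =>
      (Real.sin ((q : ℝ) * b) - tn * Real.cos ((q : ℝ) * b)) * ((q : ℝ) * x ^ (q - 1))
        + (Real.sin (-b) - tn * Real.cos (-b))) = fun x : ℝ =>
      ((Real.sin ((q : ℝ) * b) - tn * Real.cos ((q : ℝ) * b)) * (q : ℝ)) * x ^ (q - 1)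
        + 0 * x + (Real.sin (-b) - tn * Real.cos (-b)) := by
    funext x; ring
  have hDv : deriv (deriv (fun r₂ => Rhat s a r₂ b)) t
      = ((Real.sin ((q : ℝ) * b) - tn * Real.cos ((q : ℝ) * b)) * (q : ℝ))
          * (((q - 1 : ℕ) : ℝ) * t ^ (q - 1 - 1)) + 0 := by
    rw [hdD1, eD2]; exact (hd_poly _ _ _ (q - 1) t).deriv
  have hDc : deriv (deriv (fun r₂ => Rhat s a r₂ b)) t * (t * Real.cos Θ₂)
      = ((q : ℝ) - 1) * (((-1 : ℝ) ^ κ) * Real.sin Θ₃) := by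
    rw [hDv, hqc, hbS, Real.sin_add, Real.cos_add]
    linear_combination
      ((q : ℝ) * ((q : ℝ) - 1) * ((Real.sin Θ₃ * Real.cos Θ₄ + Real.cos Θ₃ * Real.sin Θ₄)
          - tn * (Real.cos Θ₃ * Real.cos Θ₄ - Real.sin Θ₃ * Real.sin Θ₄)) * Real.cos Θ₂) * htp2
      + (((q : ℝ) - 1) * ((Real.sin Θ₃ * Real.cos Θ₄ + Real.cos Θ₃ * Real.sin Θ₄)
          - tn * (Real.cos Θ₃ * Real.cos Θ₄ - Real.sin Θ₃ * Real.sin Θ₄)) * Real.cos Θ₂) * hv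
      + (-(((q : ℝ) - 1) * (Real.cos Θ₃ * Real.cos Θ₄ - Real.sin Θ₃ * Real.sin Θ₄))) * hT
      + (((q : ℝ) - 1) * (Real.sin Θ₃ * Real.cos Θ₄ + Real.cos Θ₃ * Real.sin Θ₄)) * hc24
      + (-(((q : ℝ) - 1) * (Real.cos Θ₃ * Real.cos Θ₄ - Real.sin Θ₃ * Real.sin Θ₄))) * hs24
      + (((q : ℝ) - 1) * ((-1 : ℝ) ^ κ) * Real.sin Θ₃) * py4
  -- E (mixed derivative)
  have hdE1 : (fun θ₂ => deriv (fun r₂ => Rhat s a r₂ θ₂) t) = fun θ : ℝ =>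
      (Real.sin ((q : ℝ) * θ) - tn * Real.cos ((q : ℝ) * θ)) * ((q : ℝ) * t ^ (q - 1))
        + (Real.sin (-θ) - tn * Real.cos (-θ)) := by
    funext θ; rw [eR3 θ]; exact (hd_poly _ _ _ q t).deriv
  have eE2 : (fun θ : ℝ =>
      (Real.sin ((q : ℝ) * θ) - tn * Real.cos ((q : ℝ) * θ)) * ((q : ℝ) * t ^ (q - 1))
        + (Real.sin (-θ) - tn * Real.cos (-θ))) = fun θ : ℝ =>
      ((q : ℝ) * t ^ (q - 1)) * Real.sin ((q : ℝ) * θ)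
        + (-(tn * ((q : ℝ) * t ^ (q - 1)))) * Real.cos ((q : ℝ) * θ)
        + 1 * Real.sin (-θ) + (-tn) * Real.cos (-θ) + 0 := by
    funext θ; ring
  have hEv : deriv (fun θ₂ => deriv (fun r₂ => Rhat s a r₂ θ₂) t) b
      = ((q : ℝ) * t ^ (q - 1)) * (Real.cos ((q : ℝ) * b) * (q : ℝ))
        + (-(tn * ((q : ℝ) * t ^ (q - 1)))) * (-Real.sin ((q : ℝ) * b) * (q : ℝ))
        + 1 * (-Real.cos (-b)) + (-tn) * Real.sin (-b) := by
    rw [hdE1, eE2]; exact (hd_trig0 _ _ _ _ _ _ b).deriv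
  have hEc : deriv (fun θ₂ => deriv (fun r₂ => Rhat s a r₂ θ₂) t) b * Real.cos Θ₂
      = ((q : ℝ) - 1) * (((-1 : ℝ) ^ κ) * Real.cos Θ₃) := by
    rw [hEv, hbS, hbDl, Real.sin_add, Real.cos_add, Real.sin_sub, Real.cos_sub]
    linear_combination
      ((q : ℝ) * ((Real.cos Θ₃ * Real.cos Θ₄ - Real.sin Θ₃ * Real.sin Θ₄)
          + tn * (Real.sin Θ₃ * Real.cos Θ₄ + Real.cos Θ₃ * Real.sin Θ₄)) * Real.cos Θ₂) * hv
      + ((q : ℝ) * (Real.sin Θ₃ * Real.cos Θ₄ + Real.cos Θ₃ * Real.sin Θ₄)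
          - (Real.sin Θ₄ * Real.cos Θ₃ - Real.cos Θ₄ * Real.sin Θ₃)) * hT
      + ((q : ℝ) * (Real.cos Θ₃ * Real.cos Θ₄ - Real.sin Θ₃ * Real.sin Θ₄)
          - (Real.cos Θ₄ * Real.cos Θ₃ + Real.sin Θ₄ * Real.sin Θ₃)) * hc24
      + ((q : ℝ) * (Real.sin Θ₃ * Real.cos Θ₄ + Real.cos Θ₃ * Real.sin Θ₄)
          - (Real.sin Θ₄ * Real.cos Θ₃ - Real.cos Θ₄ * Real.sin Θ₃)) * hs24
      + (((q : ℝ) - 1) * ((-1 : ℝ) ^ κ) * Real.cos Θ₃) * py4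
  -- F (second θ₂-derivative)
  have eR4 : (fun θ₂ => Rhat s a t θ₂) = fun θ : ℝ =>
      (t ^ q) * Real.sin ((q : ℝ) * θ) + (-(t ^ q * tn)) * Real.cos ((q : ℝ) * θ)
        + t * Real.sin (-θ) + (-(t * tn)) * Real.cos (-θ)
        + (m * s ^ p * Real.sin ((p : ℝ) * a + αm) + m * s * Real.sin (-a + αm)
            - tn * (m * s ^ p * Real.cos ((p : ℝ) * a + αm))
            - tn * (m * s * Real.cos (-a + αm))) := by
    funext θ; rw [hRhat, hR, hQ]; ring
  have hdF1 : deriv (fun θ₂ => Rhat s a t θ₂) = fun x : ℝ =>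
      (t ^ q) * (Real.cos ((q : ℝ) * x) * (q : ℝ))
        + (-(t ^ q * tn)) * (-Real.sin ((q : ℝ) * x) * (q : ℝ))
        + t * (-Real.cos (-x)) + (-(t * tn)) * Real.sin (-x) := by
    funext x; rw [eR4]; exact (hd_trig0 _ _ _ _ _ _ x).deriv
  have eF2 : (fun x : ℝ =>
      (t ^ q) * (Real.cos ((q : ℝ) * x) * (q : ℝ))
        + (-(t ^ q * tn)) * (-Real.sin ((q : ℝ) * x) * (q : ℝ))
        + t * (-Real.cos (-x)) + (-(t * tn)) * Real.sin (-x)) = fun x : ℝ =>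
      (t ^ q * tn * (q : ℝ)) * Real.sin ((q : ℝ) * x)
        + (t ^ q * (q : ℝ)) * Real.cos ((q : ℝ) * x)
        + (-(t * tn)) * Real.sin (-x) + (-t) * Real.cos (-x) + 0 := by
    funext x; ring
  have hFv : deriv (deriv (fun θ₂ => Rhat s a t θ₂)) b
      = (t ^ q * tn * (q : ℝ)) * (Real.cos ((q : ℝ) * b) * (q : ℝ))
        + (t ^ q * (q : ℝ)) * (-Real.sin ((q : ℝ) * b) * (q : ℝ))
        + (-(t * tn)) * (-Real.cos (-b)) + (-t) * Real.sin (-b) := by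
    rw [hdF1, eF2]; exact (hd_trig0 _ _ _ _ _ _ b).deriv
  have hFc : deriv (deriv (fun θ₂ => Rhat s a t θ₂)) b * Real.cos Θ₂
      = -(t * (((q : ℝ) - 1) * (((-1 : ℝ) ^ κ) * Real.sin Θ₃))) := by
    rw [hFv, hbS, hbDl, Real.sin_add, Real.cos_add, Real.sin_sub, Real.cos_sub]
    linear_combination
      (-((q : ℝ) ^ 2 * (tn * (Real.cos Θ₃ * Real.cos Θ₄ - Real.sin Θ₃ * Real.sin Θ₄)
          - (Real.sin Θ₃ * Real.cos Θ₄ + Real.cos Θ₃ * Real.sin Θ₄)) * Real.cos Θ₂)) * htp1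
      + (t * (q : ℝ) * (tn * (Real.cos Θ₃ * Real.cos Θ₄ - Real.sin Θ₃ * Real.sin Θ₄)
          - (Real.sin Θ₃ * Real.cos Θ₄ + Real.cos Θ₃ * Real.sin Θ₄)) * Real.cos Θ₂) * hv
      + (t * (q : ℝ) * (Real.cos Θ₃ * Real.cos Θ₄ - Real.sin Θ₃ * Real.sin Θ₄)
          + t * (Real.cos Θ₄ * Real.cos Θ₃ + Real.sin Θ₄ * Real.sin Θ₃)) * hT
      + (-(t * (q : ℝ) * (Real.sin Θ₃ * Real.cos Θ₄ + Real.cos Θ₃ * Real.sin Θ₄))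
          - t * (Real.sin Θ₄ * Real.cos Θ₃ - Real.cos Θ₄ * Real.sin Θ₃)) * hc24
      + (t * (q : ℝ) * (Real.cos Θ₃ * Real.cos Θ₄ - Real.sin Θ₃ * Real.sin Θ₄)
          + t * (Real.cos Θ₄ * Real.cos Θ₃ + Real.sin Θ₄ * Real.sin Θ₃)) * hs24
      + (-(t * (q : ℝ) * ((-1 : ℝ) ^ κ) * Real.sin Θ₃)
          + t * ((-1 : ℝ) ^ κ) * Real.sin Θ₃) * py4
  -- assemble
  have hk1sq : k₁ ^ 2 ≠ 0 := pow_ne_zero 2 hk₁0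
  have hA2 : A * (k₁ ^ 2 * (s * Real.cos Θ₂)) = m * ((p : ℝ) - 1) * Real.sin Θ₁ := by
    have h' : A * k₁ ^ 2 = deriv (deriv (fun r₁ => Rhat r₁ a t b)) s := by
      rw [hA, div_mul_cancel₀ _ hk1sq]
    linear_combination (s * Real.cos Θ₂) * h' + hNAc
  have hB2 : B * (k₁ * Real.cos Θ₂) = m * ((p : ℝ) - 1) * Real.cos Θ₁ := by
    have h' : B * k₁ = deriv (fun θ₁ => deriv (fun r₁ => Rhat r₁ θ₁ t b) s) a := by
      rw [hB, div_mul_cancel₀ _ hk₁0]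
    linear_combination (Real.cos Θ₂) * h' + hNBc
  have hC2 : C * Real.cos Θ₂ = -(m * s * (((p : ℝ) - 1) * Real.sin Θ₁)) := by
    rw [hC]; exact hCc
  have hD2 : D * (t * Real.cos Θ₂) = ((q : ℝ) - 1) * (((-1 : ℝ) ^ κ) * Real.sin Θ₃) := by
    rw [hD]; exact hDc
  have hE2 : E * Real.cos Θ₂ = ((q : ℝ) - 1) * (((-1 : ℝ) ^ κ) * Real.cos Θ₃) := by
    rw [hE]; exact hEc
  have hF2 : F * Real.cos Θ₂ = -(t * (((q : ℝ) - 1) * (((-1 : ℝ) ^ κ) * Real.sin Θ₃))) := by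
    rw [hF]; exact hFc
  exact key_det (p : ℝ) (q : ℝ) m s t (Real.cos Θ₁) (Real.sin Θ₁) (Real.cos Θ₂)
    (Real.cos Θ₃) (Real.sin Θ₃) ((-1 : ℝ) ^ κ) k₁ k₂ k₃ k₄ A B C D E F φ
    hs0 ht0 hcos hk₁0 py1 py3 hεε hk1c hk2c hk3c hk4c hA2 hB2 hC2 hD2 hE2 hF2 hφ
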